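/- Let α be a type of atoms and let G be a ground program over α in which every rule has a finite positive body. Let ES denote the collection of all embedding programs for G. Then AS(G) = AS(⋂_{E ∈ ES} E), i.e., G has the same answer sets as the intersection of all its embedding programs. -/
import Mathlib


structure GroundRule (α : Type*) where
  head : Set α
  posBody : Set α
  negBody : Set α

namespace GroundRule

variable {α : Type*}

/-- `Heads R` is the set of all head atoms of rules in `R`. -/
def Heads (R : Set (GroundRule α)) : Set α := ⋃ r ∈ R, r.head

/-- `R` body-embeds `r` (written `R ⊢_b r`). -/
def BodyEmbeds (R : Set (GroundRule α)) (r : GroundRule α) : Prop :=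
  ∀ a ∈ r.posBody, ∃ r' ∈ R, a ∈ r'.head

/-- `R` embeds `r` (written `R ⊢ r`): either `R` does not body-embed `r`,
or `R` head-embeds `r` (i.e. `r ∈ R`). -/
def Embeds (R : Set (GroundRule α)) (r : GroundRule α) : Prop :=
  ¬ BodyEmbeds R r ∨ r ∈ R

/-- `E` is an embedding program for the ground program `G`. -/
def IsEmbeddingProgram (G E : Set (GroundRule α)) : Prop :=
  E ⊆ G ∧ ∀ r ∈ G, Embeds E r

/-- The fact rule `a.` for an atom `a`. -/
def factRule (a : α) : GroundRule α := ⟨{a}, ∅, ∅⟩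

/-- `factRules F` is the set of fact rules `{a. : a ∈ F}`. -/
def factRules (F : Set α) : Set (GroundRule α) := factRule '' F

/-- The instantiation operator `Inst(P, S) = {r ∈ P : B⁺(r) ⊆ S}`. -/
def Inst (P : Set (GroundRule α)) (S : Set α) : Set (GroundRule α) :=
  {r ∈ P | r.posBody ⊆ S}

/-- Interpretation `I` satisfies the body of `r`. -/
def SatBody (I : Set α) (r : GroundRule α) : Prop :=
  r.posBody ⊆ I ∧ r.negBody ∩ I = ∅

/-- Interpretation `I` satisfies the rule `r`. -/
def SatRule (I : Set α) (r : GroundRule α) : Prop :=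
  ¬ SatBody I r ∨ (r.head ∩ I).Nonempty

/-- `I` is a model of the ground program `G`. -/
def IsModel (I : Set α) (G : Set (GroundRule α)) : Prop :=
  ∀ r ∈ G, SatRule I r

/-- FLP reduct `G^I = {r ∈ G : I ⊨ B(r)}`. -/
def reduct (G : Set (GroundRule α)) (I : Set α) : Set (GroundRule α) :=
  {r ∈ G | SatBody I r}

/-- `A` is an answer set of `G`: `A` is a model of `G^A` minimal w.r.t. `⊆`. -/
def IsAnswerSet (G : Set (GroundRule α)) (A : Set α) : Prop :=
  IsModel A (reduct G A) ∧ ∀ B, B ⊂ A → ¬ IsModel B (reduct G A)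

/-- `AS G` is the set of all answer sets of `G`. -/
def AS (G : Set (GroundRule α)) : Set (Set α) := {A | IsAnswerSet G A}

theorem Heads_mono {R R' : Set (GroundRule α)} (h : R ⊆ R') : Heads R ⊆ Heads R' := by
  intro a ha
  simp only [Heads, Set.mem_iUnion, exists_prop] at ha ⊢
  obtain ⟨r, hr, har⟩ := ha
  exact ⟨r, h hr, har⟩

/-- The monotone operator `R ↦ Inst(P, Heads(R) ∪ F)`. -/
def InstOp (P : Set (GroundRule α)) (F : Set α) :
    Set (GroundRule α) →o Set (GroundRule α) where
  toFun R := Inst P (Heads R ∪ F)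
  monotone' := fun _ _ h _ hr =>
    ⟨hr.1, hr.2.trans (Set.union_subset_union_left F (Heads_mono h))⟩

/-- `Inst^∞(P, F)`: the least fixpoint of `R ↦ Inst(P, Heads(R) ∪ F)`. -/
def InstInf (P : Set (GroundRule α)) (F : Set α) : Set (GroundRule α) :=
  OrderHom.lfp (InstOp P F)

end GroundRule

open GroundRule

section Aux

variable {α : Type*}

lemma aux_bodyEmbeds_mono {R R' : Set (GroundRule α)} (h : R ⊆ R') {r : GroundRule α}
    (hb : BodyEmbeds R r) : BodyEmbeds R' r := fun a ha =>
  let ⟨r', hr', h2⟩ := hb a ha; ⟨r', h hr', h2⟩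

lemma aux_mem_heads {R : Set (GroundRule α)} {r : GroundRule α} (hr : r ∈ R) {a : α}
    (ha : a ∈ r.head) : a ∈ Heads R := by
  simp only [Heads, Set.mem_iUnion, exists_prop]; exact ⟨r, hr, ha⟩

lemma aux_heads_mem {R : Set (GroundRule α)} {a : α} (ha : a ∈ Heads R) :
    ∃ r ∈ R, a ∈ r.head := by
  simpa only [Heads, Set.mem_iUnion, exists_prop] using ha

lemma aux_self_embedding (G : Set (GroundRule α)) : IsEmbeddingProgram G G :=
  ⟨subset_rfl, fun _ hr => Or.inr hr⟩

lemma aux_sInter_embedding (G : Set (GroundRule α)) :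
    IsEmbeddingProgram G (⋂₀ {E | IsEmbeddingProgram G E}) := by
  constructor
  · intro r hr
    exact Set.sInter_subset_of_mem (aux_self_embedding G) hr
  · intro r hr
    by_cases hb : BodyEmbeds (⋂₀ {E | IsEmbeddingProgram G E}) r
    · right
      intro E hE
      rcases hE.2 r hr with h | h
      · exact absurd (aux_bodyEmbeds_mono (Set.sInter_subset_of_mem hE) hb) h
      · exact h
    · exact Or.inl hb

/-- Support lemma: in a minimal model of a reduct, every atom is the head of
some rule of the reduct. -/
lemma aux_support {P : Set (GroundRule α)} {A : Set α} (hA : IsModel A P)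
    (hmin : ∀ B, B ⊂ A → ¬ IsModel B P)
    (hred : ∀ r ∈ P, SatBody A r) {a : α} (ha : a ∈ A) :
    ∃ r ∈ P, a ∈ r.head := by
  have hsub : A \ {a} ⊂ A := Set.sdiff_singleton_ssubset.mpr ha
  have hnm := hmin _ hsub
  simp only [IsModel, SatRule, not_forall] at hnm
  obtain ⟨r, hrP, hr⟩ := hnm
  push_neg at hr
  obtain ⟨hsb, hempty⟩ := hr
  have hAsat : (r.head ∩ A).Nonempty :=
    (hA r hrP).resolve_left (not_not_intro (hred r hrP))
  obtain ⟨x, hx1, hx2⟩ := hAsat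
  refine ⟨r, hrP, ?_⟩
  by_cases hxa : x = a
  · exact hxa ▸ hx1
  · have hempty' : r.head ∩ (A \ {a}) = ∅ := by
      simpa [Set.not_nonempty_iff_eq_empty] using hempty
    have hx : x ∈ r.head ∩ (A \ {a}) := ⟨hx1, hx2, hxa⟩
    simp [hempty'] at hx

/-- Key lemma: if `A` is an answer set of `G`, the reduct `G^A` is contained in
every embedding program of `G`. -/
lemma aux_reduct_subset_embedding {G E : Set (GroundRule α)} {A : Set α}
    (hE : IsEmbeddingProgram G E) (hA : IsAnswerSet G A) :
    reduct G A ⊆ E := by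
  set P := reduct G A with hP
  set B := Heads E ∩ A with hBdef
  have hmodel : IsModel B P := by
    intro r hrP
    by_cases hsb : SatBody B r
    · right
      have hrE : r ∈ E := by
        rcases hE.2 r hrP.1 with h | h
        · exact absurd (fun a ha => aux_heads_mem (hsb.1 ha).1) h
        · exact h
      have hne : (r.head ∩ A).Nonempty :=
        (hA.1 r hrP).resolve_left (not_not_intro hrP.2)
      obtain ⟨x, hx1, hx2⟩ := hne
      exact ⟨x, hx1, aux_mem_heads hrE hx1, hx2⟩
    · exact Or.inl hsb
  have hBA : B ⊆ A := Set.inter_subset_right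
  have hBeq : B = A := by
    by_contra hne
    exact hA.2 B (HasSubset.Subset.ssubset_of_ne hBA hne) hmodel
  intro r hrP
  rcases hE.2 r hrP.1 with h | h
  · exfalso
    apply h
    intro a ha
    have haA : a ∈ A := hrP.2.1 ha
    rw [← hBeq] at haA
    exact aux_heads_mem haA.1
  · exact h

end Aux

/-- `G` has the same answer sets as the intersection of all its
embedding programs. -/
theorem answerSets_eq_sInter_embeddings {α : Type*} (G : Set (GroundRule α))
    (hfin : ∀ r ∈ G, r.posBody.Finite) :
    AS G = AS (⋂₀ {E | IsEmbeddingProgram G E}) := by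
  set M := ⋂₀ {E | IsEmbeddingProgram G E} with hM
  have hME : IsEmbeddingProgram G M := aux_sInter_embedding G
  ext A
  constructor
  · intro hA
    have hA' : IsAnswerSet G A := hA
    have hsub : reduct G A ⊆ M :=
      Set.subset_sInter (fun E hE => aux_reduct_subset_embedding hE hA')
    have heq : reduct M A = reduct G A := by
      ext r
      exact ⟨fun h => ⟨hME.1 h.1, h.2⟩, fun h => ⟨hsub h, h.2⟩⟩
    show IsAnswerSet M A
    unfold IsAnswerSet
    rw [heq]
    exact hA'
  · intro hA
    have hA' : IsAnswerSet M A := hA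
    have hred : ∀ r ∈ reduct M A, SatBody A r := fun r hr => hr.2
    have hsub : reduct G A ⊆ M := by
      intro r hr
      rcases hME.2 r hr.1 with h | h
      · exfalso
        apply h
        intro a ha
        have haA : a ∈ A := hr.2.1 ha
        obtain ⟨r', hr'P, hr'h⟩ := aux_support hA'.1 hA'.2 hred haA
        exact ⟨r', hr'P.1, hr'h⟩
      · exact h
    have heq : reduct M A = reduct G A := by
      ext r
      exact ⟨fun h => ⟨hME.1 h.1, h.2⟩, fun h => ⟨hsub h, h.2⟩⟩
    show IsAnswerSet G A
    unfold IsAnswerSet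
    rw [← heq]
    exact hA'
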